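/- arXiv:2412.04334 — 3 statements merged into one kernel-verified Lean document; each statement's English description precedes it below -/
import Mathlib

section
/- For all real parameters μ > 0, ϑ > 0, ζ > 0 and all real a, h, the three-parameter Mittag-Leffler function satisfies the Taylor-type expansion E_{μ,ϑ}^{ζ}(a + h) = ∑_{n=0}^∞ (h^n / n!) (ζ)_n E_{μ,ϑ+nμ}^{ζ+n}(a), the series on the right converging absolutely. -/
open Real

/-- Rising factorial (Pochhammer symbol) `(ζ)_n = Γ(ζ+n)/Γ(ζ)`. -/
noncomputable def risingFactorial (ζ : ℝ) (n : ℕ) : ℝ :=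
  Real.Gamma (ζ + n) / Real.Gamma ζ

/-- Three-parameter (Prabhakar) Mittag-Leffler function. -/
noncomputable def mittagLeffler (μ ϑ ζ z : ℝ) : ℝ :=
  ∑' m : ℕ, risingFactorial ζ m * z ^ m / (m.factorial * Real.Gamma (μ * m + ϑ))

lemma rF_pos {ζ : ℝ} (hζ : 0 < ζ) (n : ℕ) : 0 < risingFactorial ζ n :=
  div_pos (Real.Gamma_pos_of_pos (by positivity)) (Real.Gamma_pos_of_pos hζ)

lemma rF_succ {ζ : ℝ} (hζ : 0 < ζ) (n : ℕ) :
    risingFactorial ζ (n + 1) = risingFactorial ζ n * (ζ + n) := by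
  unfold risingFactorial
  have h : ζ + ((n : ℝ) + 1) = (ζ + n) + 1 := by ring
  rw [Nat.cast_add, Nat.cast_one, h, Real.Gamma_add_one (by positivity)]
  ring

lemma rF_add {ζ : ℝ} (hζ : 0 < ζ) (n k : ℕ) :
    risingFactorial ζ (n + k) = risingFactorial ζ n * risingFactorial (ζ + n) k := by
  unfold risingFactorial
  have h1 : Real.Gamma ζ ≠ 0 := (Real.Gamma_pos_of_pos hζ).ne'
  have h2 : Real.Gamma (ζ + n) ≠ 0 := (Real.Gamma_pos_of_pos (by positivity)).ne'
  have h : ζ + ((n : ℝ) + k) = (ζ + n) + k := by ring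
  rw [Nat.cast_add, h]
  field_simp

lemma gamma_ratio {μ x : ℝ} (hμ : 0 < μ) (hx : 1 < x) :
    Real.Gamma x * (x - 1) ^ μ ≤ Real.Gamma (x + μ) := by
  have h0 : (0:ℝ) < x - 1 := by linarith
  have hs := Real.convexOn_log_Gamma.slope_mono_adjacent (x := x - 1) (y := x) (z := x + μ)
      (Set.mem_Ioi.mpr h0) (Set.mem_Ioi.mpr (by linarith)) (by linarith) (by linarith)
  simp only [Function.comp_apply] at hs
  have e1 : Real.Gamma x = (x - 1) * Real.Gamma (x - 1) := by
    have := Real.Gamma_add_one (s := x - 1) h0.ne'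
    rw [sub_add_cancel] at this
    exact this
  have e2 : Real.log (Real.Gamma x) - Real.log (Real.Gamma (x - 1)) = Real.log (x - 1) := by
    rw [e1, Real.log_mul h0.ne' (Real.Gamma_pos_of_pos h0).ne']
    ring
  rw [show x - (x - 1) = 1 by ring, show x + μ - x = μ by ring, e2, div_one] at hs
  have key : μ * Real.log (x - 1) + Real.log (Real.Gamma x) ≤ Real.log (Real.Gamma (x + μ)) := by
    rw [le_div_iff₀ hμ] at hs
    nlinarith
  have hl : Real.Gamma x * (x - 1) ^ μ
      = Real.exp (Real.log (Real.Gamma x) + μ * Real.log (x - 1)) := by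
    rw [Real.exp_add, Real.exp_log (Real.Gamma_pos_of_pos (by linarith)),
      Real.rpow_def_of_pos h0, mul_comm μ]
  rw [hl, ← Real.exp_log (Real.Gamma_pos_of_pos (by positivity : (0:ℝ) < x + μ))]
  exact Real.exp_le_exp.mpr (by linarith)

lemma ml_summable {μ ϑ ζ : ℝ} (hμ : 0 < μ) (hϑ : 0 < ϑ) (hζ : 0 < ζ) {z : ℝ} (hz : 0 ≤ z) :
    Summable fun m : ℕ => risingFactorial ζ m * z ^ m / (m.factorial * Real.Gamma (μ * m + ϑ)) := by
  apply summable_of_ratio_norm_eventually_le (r := 1/2) (by norm_num)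
  have h1 : Filter.Tendsto (fun m : ℕ => μ * m + ϑ - 1) Filter.atTop Filter.atTop := by
    have := Filter.tendsto_atTop_add_const_right Filter.atTop (ϑ - 1)
      ((tendsto_natCast_atTop_atTop (R := ℝ)).const_mul_atTop hμ)
    simpa [add_sub_assoc] using this
  have h2 : Filter.Tendsto (fun m : ℕ => (μ * m + ϑ - 1) ^ μ) Filter.atTop Filter.atTop :=
    (tendsto_rpow_atTop hμ).comp h1
  filter_upwards [h2.eventually_ge_atTop (2 * ((ζ + 1) * z)), h1.eventually_gt_atTop 0]
    with m hA hB
  set x : ℝ := μ * m + ϑ with hxdef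
  have hx1 : 1 < x := by linarith
  have hΓx : 0 < Real.Gamma x := Real.Gamma_pos_of_pos (by linarith)
  have hΓxμ : 0 < Real.Gamma (x + μ) := Real.Gamma_pos_of_pos (by linarith)
  have hrF : 0 < risingFactorial ζ m := rF_pos hζ m
  have hfac : (0:ℝ) < m.factorial := by positivity
  have hzm : (0:ℝ) ≤ z ^ m := pow_nonneg hz m
  have key : (ζ + m) * z * Real.Gamma x ≤ 1/2 * (m + 1) * Real.Gamma (x + μ) := by
    have hζm : ζ + (m:ℝ) ≤ (ζ + 1) * (m + 1) := by nlinarith [Nat.cast_nonneg (α := ℝ) m]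
    have c1 : (ζ + m) * z * Real.Gamma x ≤ (ζ + 1) * (m + 1) * z * Real.Gamma x := by
      have : (0:ℝ) ≤ z * Real.Gamma x := mul_nonneg hz hΓx.le
      nlinarith
    have c2 : (ζ + 1) * (m + 1) * z * Real.Gamma x
        ≤ (m + 1) * (1/2 * (x - 1) ^ μ) * Real.Gamma x := by
      have h' : (ζ + 1) * z ≤ 1/2 * (x - 1) ^ μ := by
        rw [show x - 1 = μ * m + ϑ - 1 by rw [hxdef]]
        linarith
      have hm1 : (0:ℝ) ≤ (m:ℝ) + 1 := by positivity
      nlinarith [mul_le_mul_of_nonneg_left h' (mul_nonneg hm1 hΓx.le)]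
    have c3 : (m + 1 : ℝ) * (1/2 * (x - 1) ^ μ) * Real.Gamma x
        ≤ 1/2 * (m + 1) * Real.Gamma (x + μ) := by
      have := gamma_ratio hμ hx1
      have hm1 : (0:ℝ) ≤ (m:ℝ) + 1 := by positivity
      nlinarith
    linarith
  -- now the main inequality
  have harg : μ * ((m : ℕ) + 1 : ℕ) + ϑ = x + μ := by push_cast; ring
  rw [Real.norm_eq_abs, Real.norm_eq_abs, rF_succ hζ, harg,
    abs_of_nonneg (by positivity), abs_of_nonneg (by positivity)]
  have hfacs : ((m+1 : ℕ).factorial : ℝ) = (m + 1) * m.factorial := by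
    rw [Nat.factorial_succ]; push_cast; ring
  rw [hfacs, pow_succ,
    show (1/2 : ℝ) * (risingFactorial ζ m * z ^ m / (↑m.factorial * Real.Gamma x))
      = (risingFactorial ζ m * z ^ m) / (2 * (↑m.factorial * Real.Gamma x)) by ring,
    div_le_div_iff₀ (by positivity) (by positivity)]
  have := mul_le_mul_of_nonneg_left key
    (show (0:ℝ) ≤ 2 * (risingFactorial ζ m * z ^ m * m.factorial) by positivity)
  nlinarith [this]

lemma ml_summable' {μ ϑ ζ : ℝ} (hμ : 0 < μ) (hϑ : 0 < ϑ) (hζ : 0 < ζ) (z : ℝ) :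
    Summable fun m : ℕ => risingFactorial ζ m * z ^ m / (m.factorial * Real.Gamma (μ * m + ϑ)) := by
  apply Summable.of_abs
  have he : (fun m : ℕ => |risingFactorial ζ m * z ^ m / (m.factorial * Real.Gamma (μ * m + ϑ))|)
      = fun m : ℕ => risingFactorial ζ m * |z| ^ m / (m.factorial * Real.Gamma (μ * m + ϑ)) := by
    funext m
    rw [abs_div, abs_mul, abs_of_pos (rF_pos hζ m), abs_pow,
      abs_of_pos (by positivity : (0:ℝ) < (m.factorial : ℝ) * Real.Gamma (μ * m + ϑ))]
  rw [he]
  exact ml_summable hμ hϑ hζ (abs_nonneg z)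

lemma sum_antidiag {μ ϑ ζ : ℝ} (hμ : 0 < μ) (hϑ : 0 < ϑ) (hζ : 0 < ζ) (x y : ℝ) (m : ℕ) :
    ∑ p ∈ Finset.HasAntidiagonal.antidiagonal m, risingFactorial ζ (p.1 + p.2) * x ^ p.1 * y ^ p.2 /
      (p.1.factorial * p.2.factorial * Real.Gamma (μ * (p.1 + p.2) + ϑ))
    = risingFactorial ζ m * (x + y) ^ m / (m.factorial * Real.Gamma (μ * m + ϑ)) := by
  rw [Finset.Nat.sum_antidiagonal_eq_sum_range_succ (fun n k =>
      risingFactorial ζ (n + k) * x ^ n * y ^ k /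
        (n.factorial * k.factorial * Real.Gamma (μ * (n + k) + ϑ))) m,
    Commute.add_pow (Commute.all x y) m, Finset.mul_sum, Finset.sum_div]
  refine Finset.sum_congr rfl fun i hi => ?_
  have him : i ≤ m := Nat.lt_succ_iff.mp (Finset.mem_range.mp hi)
  have hadd : i + (m - i) = m := Nat.add_sub_cancel' him
  rw [hadd]
  have hch : ((m.choose i : ℝ)) * i.factorial * (m - i).factorial = m.factorial := by
    exact_mod_cast congrArg (Nat.cast (R := ℝ)) (Nat.choose_mul_factorial_mul_factorial him)
  have h1 : (0:ℝ) < i.factorial := by positivity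
  have h2 : (0:ℝ) < (m - i).factorial := by positivity
  have h3 : (0:ℝ) < m.factorial := by positivity
  have h4 : 0 < Real.Gamma (μ * m + ϑ) := Real.Gamma_pos_of_pos (by positivity)
  rw [show (i:ℝ) + ((m - i : ℕ):ℝ) = m by exact_mod_cast hadd]
  field_simp
  linear_combination (-(risingFactorial ζ m) * x ^ i * y ^ (m - i)) * hch

/-- Taylor-type expansion of the three-parameter Mittag-Leffler function:
`E_{μ,ϑ}^{ζ}(a+h) = ∑_{n} (h^n/n!) (ζ)_n E_{μ,ϑ+nμ}^{ζ+n}(a)`, the series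
on the right converging absolutely. -/
theorem mittagLeffler_taylor (μ ϑ ζ a h : ℝ) (hμ : 0 < μ) (hϑ : 0 < ϑ) (hζ : 0 < ζ) :
    (Summable fun n : ℕ =>
      |h ^ n / n.factorial * risingFactorial ζ n * mittagLeffler μ (ϑ + n * μ) (ζ + n) a|) ∧
    HasSum (fun n : ℕ =>
        h ^ n / n.factorial * risingFactorial ζ n * mittagLeffler μ (ϑ + n * μ) (ζ + n) a)
      (mittagLeffler μ ϑ ζ (a + h)) := by
  set F : ℕ × ℕ → ℝ := fun p => risingFactorial ζ (p.1 + p.2) * h ^ p.1 * a ^ p.2 /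
      (p.1.factorial * p.2.factorial * Real.Gamma (μ * (p.1 + p.2) + ϑ)) with hFdef
  set G : ℕ × ℕ → ℝ := fun p => risingFactorial ζ (p.1 + p.2) * |h| ^ p.1 * |a| ^ p.2 /
      (p.1.factorial * p.2.factorial * Real.Gamma (μ * (p.1 + p.2) + ϑ)) with hGdef
  have hΓpos : ∀ p : ℕ × ℕ, (0:ℝ) < p.1.factorial * p.2.factorial
      * Real.Gamma (μ * (p.1 + p.2) + ϑ) := by
    intro p
    have := Real.Gamma_pos_of_pos (show (0:ℝ) < μ * (p.1 + p.2 : ℕ) + ϑ by positivity)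
    positivity
  have habs : ∀ p, |F p| = G p := by
    intro p
    rw [hFdef, hGdef]
    simp only
    rw [abs_div, abs_mul, abs_mul, abs_of_pos (rF_pos hζ _), abs_pow, abs_pow,
      abs_of_pos (hΓpos p)]
  have hGnonneg : ∀ p, 0 ≤ G p := fun p => habs p ▸ abs_nonneg (F p)
  -- the dominating series
  have ht : Summable fun m : ℕ =>
      risingFactorial ζ m * (|h| + |a|) ^ m / (m.factorial * Real.Gamma (μ * m + ϑ)) :=
    ml_summable hμ hϑ hζ (by positivity)
  have htnn : ∀ m : ℕ, 0 ≤ risingFactorial ζ m * (|h| + |a|) ^ m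
      / (m.factorial * Real.Gamma (μ * m + ϑ)) := by
    intro m
    have h1 := rF_pos hζ m
    have h2 := Real.Gamma_pos_of_pos (show (0:ℝ) < μ * m + ϑ by positivity)
    positivity
  have hGsum : Summable G := by
    apply summable_of_sum_le (c := ∑' m, risingFactorial ζ m * (|h| + |a|) ^ m
      / (m.factorial * Real.Gamma (μ * m + ϑ))) hGnonneg
    intro u
    set M := u.sup fun p => p.1 + p.2 with hM
    have hsub : u ⊆ (Finset.range (M + 1)).biUnion fun m => Finset.HasAntidiagonal.antidiagonal m := by
      intro p hp
      exact Finset.mem_biUnion.mpr ⟨p.1 + p.2,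
        Finset.mem_range.mpr (Nat.lt_succ_of_le (Finset.le_sup (f := fun p => p.1 + p.2) hp)),
        Finset.HasAntidiagonal.mem_antidiagonal.mpr rfl⟩
    have hdisj : (↑(Finset.range (M + 1)) : Set ℕ).PairwiseDisjoint
        fun m => Finset.HasAntidiagonal.antidiagonal (A := ℕ) m := by
      intro m1 _ m2 _ hne
      refine Finset.disjoint_left.mpr fun p hp1 hp2 => hne ?_
      rw [← Finset.HasAntidiagonal.mem_antidiagonal.mp hp1, ← Finset.HasAntidiagonal.mem_antidiagonal.mp hp2]
    calc ∑ p ∈ u, G p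
        ≤ ∑ p ∈ (Finset.range (M + 1)).biUnion fun m => Finset.HasAntidiagonal.antidiagonal m, G p :=
          Finset.sum_le_sum_of_subset_of_nonneg hsub fun p _ _ => hGnonneg p
      _ = ∑ m ∈ Finset.range (M + 1), ∑ p ∈ Finset.HasAntidiagonal.antidiagonal m, G p :=
          Finset.sum_biUnion hdisj
      _ = ∑ m ∈ Finset.range (M + 1), risingFactorial ζ m * (|h| + |a|) ^ m
            / (m.factorial * Real.Gamma (μ * m + ϑ)) :=
          Finset.sum_congr rfl fun m _ => sum_antidiag hμ hϑ hζ |h| |a| m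
      _ ≤ ∑' m, risingFactorial ζ m * (|h| + |a|) ^ m
            / (m.factorial * Real.Gamma (μ * m + ϑ)) :=
          Summable.sum_le_tsum _ (fun m _ => htnn m) ht
  have hFabs : Summable fun p => |F p| := by
    simpa only [habs] using hGsum
  have hFsum : Summable F := hFabs.of_abs
  -- fiberwise sums
  have hfib : ∀ n : ℕ, HasSum (fun k => F (n, k))
      (h ^ n / n.factorial * risingFactorial ζ n * mittagLeffler μ (ϑ + n * μ) (ζ + n) a) := by
    intro n
    have hml : HasSum (fun k : ℕ => risingFactorial (ζ + n) k * a ^ k /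
        (k.factorial * Real.Gamma (μ * k + (ϑ + n * μ))))
        (mittagLeffler μ (ϑ + n * μ) (ζ + n) a) :=
      (ml_summable' hμ (by positivity) (by positivity) a).hasSum
    have := hml.mul_left (h ^ n / n.factorial * risingFactorial ζ n)
    have hpt : (fun k : ℕ => F (n, k)) = fun k : ℕ =>
        h ^ n / n.factorial * risingFactorial ζ n * (risingFactorial (ζ + n) k * a ^ k /
          (k.factorial * Real.Gamma (μ * k + (ϑ + n * μ)))) := by
      funext k
      rw [hFdef]
      simp only
      rw [rF_add hζ n k, show μ * ((n : ℝ) + k) + ϑ = μ * k + (ϑ + n * μ) by ring]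
      ring
    rw [hpt]
    exact this
  have hmain : HasSum (fun n : ℕ =>
      h ^ n / n.factorial * risingFactorial ζ n * mittagLeffler μ (ϑ + n * μ) (ζ + n) a)
      (∑' p, F p) := hFsum.hasSum.prod_fiberwise hfib
  -- identify the total sum via antidiagonal grouping
  have hsum_sigma : Summable fun x : Σ m : ℕ, Finset.HasAntidiagonal.antidiagonal (A := ℕ) m => F x.2 :=
    Finset.HasAntidiagonal.sigmaAntidiagonalEquivProd.summable_iff.mpr hFsum
  have htotal : ∑' p, F p = mittagLeffler μ ϑ ζ (a + h) := by
    have h1 : ∑' p : ℕ × ℕ, F p = ∑' m : ℕ, ∑ p ∈ Finset.HasAntidiagonal.antidiagonal m, F p := by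
      conv_rhs => congr; ext; rw [← Finset.sum_finset_coe, ← tsum_fintype (L := SummationFilter.unconditional _)]
      rw [← Finset.HasAntidiagonal.sigmaAntidiagonalEquivProd.tsum_eq F]
      exact Summable.tsum_sigma' (fun m => (hasSum_fintype _).summable) hsum_sigma
    rw [h1]
    unfold mittagLeffler
    refine tsum_congr fun m => ?_
    rw [sum_antidiag hμ hϑ hζ h a m, add_comm h a]
  -- first conjunct
  refine ⟨?_, htotal ▸ hmain⟩
  have hGfact := (summable_prod_of_nonneg (fun p => hGnonneg p)).mp hGsum
  refine Summable.of_nonneg_of_le (fun n => abs_nonneg _) (fun n => ?_) hGfact.2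
  rw [← (hfib n).tsum_eq]
  calc |∑' k, F (n, k)| ≤ ∑' k, |F (n, k)| := by
        have := norm_tsum_le_tsum_norm (f := fun k => F (n, k)) ?_
        · simpa using this
        · simpa only [Real.norm_eq_abs, habs] using hGsum.prod_factor n
    _ = ∑' k, G (n, k) := tsum_congr fun k => habs (n, k)
end

section
/- Let 0 < μ ≤ 1, ζ > 0, ϑ ≥ μζ, 0 < θ ≤ 1, λ > 0 and t > 0. Then the mean of the fractional counting process satisfies ∑_{n=0}^∞ n · P(n,t) = ζ Γ(ϑ) λ t^θ / Γ(μ + ϑ), the series converging absolutely. -/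
open Real

/-- Probability function of the fractional counting process. -/
noncomputable def fcpP (μ ϑ ζ θ lam : ℝ) (n : ℕ) (t : ℝ) : ℝ :=
  risingFactorial ζ n * Real.Gamma ϑ * (lam * t ^ θ) ^ n / n.factorial *
    ∑' k : ℕ, risingFactorial (ζ + n) k * (-(lam * t ^ θ)) ^ k /
      (k.factorial * Real.Gamma (μ * (n + k : ℕ) + ϑ))

open Filter

private lemma alt_sum_real (n : ℕ) :
    ∑ i ∈ Finset.range (n + 1), (-1 : ℝ) ^ i * (n.choose i : ℝ) = if n = 0 then 1 else 0 := by
  have h := Int.alternating_sum_range_choose (n := n)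
  have h2 := congrArg (fun z : ℤ => (z : ℝ)) h
  push_cast at h2
  rcases eq_or_ne n 0 with h0 | h0 <;> simp [h0] at h2 ⊢ <;> convert h2 using 2

private lemma alt_sum_real' (n : ℕ) :
    ∑ i ∈ Finset.range (n + 1), (-1 : ℝ) ^ (n - i) * (n.choose i : ℝ) = if n = 0 then 1 else 0 := by
  have key : ∀ i ∈ Finset.range (n + 1),
      (-1 : ℝ) ^ (n - i) * (n.choose i : ℝ) = (-1) ^ n * ((-1) ^ i * (n.choose i : ℝ)) := by
    intro i hi
    have him : i ≤ n := Nat.lt_succ_iff.1 (Finset.mem_range.1 hi)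
    have h1 : (-1 : ℝ) ^ n = (-1) ^ (n - i) * (-1) ^ i := by
      rw [← pow_add, Nat.sub_add_cancel him]
    have h2 : (-1 : ℝ) ^ i * (-1) ^ i = 1 := by
      rw [← pow_add, ← two_mul, pow_mul]; norm_num
    calc (-1 : ℝ) ^ (n - i) * (n.choose i : ℝ)
        = ((-1 : ℝ) ^ (n-i) * ((-1) ^ i * (-1) ^ i)) * (n.choose i : ℝ) := by rw [h2]; ring
      _ = (-1) ^ n * ((-1) ^ i * (n.choose i : ℝ)) := by rw [h1]; ring
  rw [Finset.sum_congr rfl key, ← Finset.mul_sum, alt_sum_real]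
  rcases eq_or_ne n 0 with h0 | h0 <;> simp [h0]

private lemma comb_sum (m : ℕ) :
    ∑ i ∈ Finset.range (m + 1), (i : ℝ) * (-1) ^ (m - i) * (m.choose i : ℝ)
      = if m = 1 then 1 else 0 := by
  cases m with
  | zero => simp
  | succ m' =>
    rw [Finset.sum_range_succ']
    simp only [Nat.cast_zero, zero_mul, add_zero, Nat.cast_succ]
    have key : ∀ i ∈ Finset.range (m' + 1),
        ((i : ℝ) + 1) * (-1) ^ (m' + 1 - (i + 1)) * ((m' + 1).choose (i + 1) : ℝ)
          = ((m' : ℝ) + 1) * ((-1) ^ (m' - i) * (m'.choose i : ℝ)) := by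
      intro i hi
      have h := Nat.add_one_mul_choose_eq m' i
      have h2 : ((m' + 1 : ℕ) : ℝ) * (m'.choose i : ℝ) = ((m' + 1).choose (i + 1) : ℝ) * ((i + 1 : ℕ) : ℝ) := by
        exact_mod_cast congrArg (Nat.cast : ℕ → ℝ) h
      push_cast at h2
      have h3 : m' + 1 - (i + 1) = m' - i := by omega
      rw [h3]; linear_combination (-(-1:ℝ) ^ (m' - i)) * h2
    rw [Finset.sum_congr rfl key, ← Finset.mul_sum, alt_sum_real']
    rcases eq_or_ne m' 0 with h0 | h0 <;> simp [h0]

private lemma gamma_lb (μ y : ℝ) (hμ0 : 0 < μ) (hμ1 : μ ≤ 1) (hy : 1 ≤ y) :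
    (1 / 2) * (y + 1) ^ μ * Real.Gamma y ≤ Real.Gamma (y + μ) := by
  have hy0 : (0:ℝ) < y := by linarith
  have hyμ0 : (0:ℝ) < y + μ := by linarith
  have hΓy : 0 < Real.Gamma y := Real.Gamma_pos_of_pos hy0
  have hΓyμ : 0 < Real.Gamma (y + μ) := Real.Gamma_pos_of_pos hyμ0
  have hc := Real.convexOn_log_Gamma.2 (Set.mem_Ioi.mpr hyμ0)
    (Set.mem_Ioi.mpr (by linarith : (0:ℝ) < y + μ + 1)) hμ0.le
    (by linarith : (0:ℝ) ≤ 1 - μ) (by ring)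
  simp only [Function.comp_apply, smul_eq_mul] at hc
  have harg : μ * (y + μ) + (1 - μ) * (y + μ + 1) = y + 1 := by ring
  rw [harg, Real.Gamma_add_one hyμ0.ne', Real.log_mul hyμ0.ne' hΓyμ.ne'] at hc
  have h2 : Real.log (Real.Gamma (y + 1))
      ≤ Real.log (Real.Gamma (y + μ)) + (1 - μ) * Real.log (y + μ) := by nlinarith [hc]
  have h3 : Real.Gamma (y + 1) ≤ Real.Gamma (y + μ) * (y + μ) ^ (1 - μ) := by
    have h4 := Real.exp_le_exp.mpr h2
    rw [Real.exp_log (Real.Gamma_pos_of_pos (by linarith : (0:ℝ) < y + 1)),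
      Real.exp_add, Real.exp_log hΓyμ] at h4
    rwa [Real.rpow_def_of_pos hyμ0, mul_comm (Real.log (y + μ))]
  rw [Real.Gamma_add_one hy0.ne'] at h3
  have h4 : (y + μ) ^ (1 - μ) ≤ (y + 1) ^ (1 - μ) :=
    Real.rpow_le_rpow hyμ0.le (by linarith) (by linarith)
  have h5 : (y + 1) ^ ((1:ℝ) - μ) * (y + 1) ^ μ = y + 1 := by
    rw [← Real.rpow_add (by linarith), sub_add_cancel, Real.rpow_one]
  have h6 : y * Real.Gamma y ≤ Real.Gamma (y + μ) * (y + 1) ^ ((1:ℝ) - μ) :=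
    le_trans h3 (by nlinarith [hΓyμ])
  have hq : (0:ℝ) < (y + 1) ^ ((1:ℝ) - μ) := Real.rpow_pos_of_pos (by linarith) _
  have h7 : (1 / 2) * (y + 1) ^ μ * Real.Gamma y * (y + 1) ^ ((1:ℝ) - μ)
      ≤ Real.Gamma (y + μ) * (y + 1) ^ ((1:ℝ) - μ) := by
    have he : (1 / 2) * (y + 1) ^ μ * Real.Gamma y * (y + 1) ^ ((1:ℝ) - μ)
        = (1 / 2) * (y + 1) * Real.Gamma y := by
      linear_combination (1 / 2 * Real.Gamma y) * h5
    rw [he]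
    nlinarith [h6, hΓy]
  exact le_of_mul_le_mul_right h7 hq

noncomputable def fcpTerm (μ ϑ ζ x : ℝ) (p : ℕ × ℕ) : ℝ :=
  (p.1 : ℝ) * (risingFactorial ζ p.1 * Real.Gamma ϑ * x ^ p.1 / p.1.factorial) *
    (risingFactorial (ζ + p.1) p.2 * (-x) ^ p.2 /
      (p.2.factorial * Real.Gamma (μ * ((p.1 + p.2 : ℕ) : ℝ) + ϑ)))

set_option maxRecDepth 10000 in
private lemma fcpTerm_eq (μ ϑ ζ x : ℝ) (hζ : 0 < ζ) (n k : ℕ)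
    (hG : Real.Gamma (μ * ((n + k : ℕ) : ℝ) + ϑ) ≠ 0) :
    fcpTerm μ ϑ ζ x (n, k) = (-1) ^ k *
      ((n : ℝ) * Real.Gamma ϑ * Real.Gamma (ζ + ((n + k : ℕ) : ℝ)) * x ^ (n + k) /
        (Real.Gamma ζ * n.factorial * k.factorial *
          Real.Gamma (μ * ((n + k : ℕ) : ℝ) + ϑ))) := by
  have h1 : Real.Gamma ζ ≠ 0 := (Real.Gamma_pos_of_pos hζ).ne'
  have h2 : Real.Gamma (ζ + (n:ℝ)) ≠ 0 := (Real.Gamma_pos_of_pos (by positivity)).ne'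
  have h3 : (n.factorial : ℝ) ≠ 0 := by exact_mod_cast n.factorial_ne_zero
  have h4 : (k.factorial : ℝ) ≠ 0 := by exact_mod_cast k.factorial_ne_zero
  have hadd : ζ + ((n + k : ℕ) : ℝ) = ζ + (n:ℝ) + (k:ℝ) := by push_cast; ring
  simp only [fcpTerm, risingFactorial, hadd]
  rw [neg_pow x, pow_add]
  have h2' : Real.Gamma ((n:ℝ) + ζ) ≠ 0 := by rwa [add_comm]
  have hG' : Real.Gamma ((n:ℝ) * μ + (k:ℝ) * μ + ϑ) ≠ 0 := by
    have he : (n:ℝ) * μ + (k:ℝ) * μ + ϑ = μ * ((n + k : ℕ) : ℝ) + ϑ := by push_cast; ring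
    rwa [he]
  field_simp [h1, h2, h2', h3, h4, hG, hG']

private lemma fcpTerm_abs (μ ϑ ζ x : ℝ) (hζ : 0 < ζ) (hϑ : 0 < ϑ) (hx : 0 < x) (n k : ℕ)
    (hG : 0 < Real.Gamma (μ * ((n + k : ℕ) : ℝ) + ϑ)) :
    |fcpTerm μ ϑ ζ x (n, k)| =
      (n : ℝ) * Real.Gamma ϑ * Real.Gamma (ζ + ((n + k : ℕ) : ℝ)) * x ^ (n + k) /
        (Real.Gamma ζ * n.factorial * k.factorial *
          Real.Gamma (μ * ((n + k : ℕ) : ℝ) + ϑ)) := by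
  rw [fcpTerm_eq μ ϑ ζ x hζ n k hG.ne', abs_mul, abs_pow, abs_neg, abs_one, one_pow, one_mul]
  have hζm : (0:ℝ) < Real.Gamma (ζ + ((n + k : ℕ) : ℝ)) := Real.Gamma_pos_of_pos (by positivity)
  rw [abs_of_nonneg]
  have hΓζ := Real.Gamma_pos_of_pos hζ
  have hΓϑ := Real.Gamma_pos_of_pos hϑ
  positivity

noncomputable def fcpBound (μ ϑ ζ x : ℝ) (m : ℕ) : ℝ :=
  Real.Gamma ϑ * Real.Gamma (ζ + (m:ℝ)) * (2*x) ^ m * ((m:ℝ)+1)^2 /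
    (Real.Gamma ζ * m.factorial * Real.Gamma (μ * (m:ℝ) + ϑ))



private lemma facpos (j : ℕ) : (0:ℝ) < (j.factorial : ℝ) := by exact_mod_cast j.factorial_pos

private lemma fcpBound_nonneg (μ ϑ ζ x : ℝ) (hμ : 0 < μ) (hζ : 0 < ζ) (hϑ0 : 0 < ϑ)
    (hx : 0 < x) (m : ℕ) : 0 ≤ fcpBound μ ϑ ζ x m := by
  have h1 := Real.Gamma_pos_of_pos hζ
  have h2 := Real.Gamma_pos_of_pos hϑ0
  have h3 : (0:ℝ) < Real.Gamma (ζ + (m:ℝ)) := Real.Gamma_pos_of_pos (by positivity)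
  have h4 : (0:ℝ) < Real.Gamma (μ * (m:ℝ) + ϑ) := Real.Gamma_pos_of_pos (by positivity)
  have h5 := facpos m
  have h6 : (0:ℝ) < (2*x)^m := by positivity
  unfold fcpBound
  positivity

set_option maxHeartbeats 1000000 in
private lemma fcpBound_summable (μ ϑ ζ x : ℝ) (hμ : 0 < μ) (hμ1 : μ ≤ 1) (hζ : 0 < ζ)
    (hϑ0 : 0 < ϑ) (hx : 0 < x) : Summable (fcpBound μ ϑ ζ x) := by
  have hΓζ := Real.Gamma_pos_of_pos hζ
  have hΓϑ := Real.Gamma_pos_of_pos hϑ0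
  apply summable_of_ratio_norm_eventually_le (r := 1/2) (by norm_num)
  have hT : Tendsto (fun m : ℕ => μ * (m:ℝ) + ϑ) atTop atTop := by
    apply tendsto_atTop_add_const_right
    exact Tendsto.const_mul_atTop hμ tendsto_natCast_atTop_atTop
  have hT1 : Tendsto (fun m : ℕ => μ * (m:ℝ) + ϑ + 1) atTop atTop :=
    tendsto_atTop_add_const_right _ 1 hT
  have hTr : Tendsto (fun m : ℕ => (μ * (m:ℝ) + ϑ + 1) ^ μ) atTop atTop :=
    (tendsto_rpow_atTop hμ).comp hT1
  filter_upwards [hT.eventually_ge_atTop 1, hTr.eventually_ge_atTop (64 * x),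
    tendsto_natCast_atTop_atTop.eventually_ge_atTop ζ] with m hy1 h64 hmζ
  have h3 : (0:ℝ) < Real.Gamma (ζ + (m:ℝ)) := Real.Gamma_pos_of_pos (by positivity)
  have h4 : (0:ℝ) < Real.Gamma (μ * (m:ℝ) + ϑ) := Real.Gamma_pos_of_pos (by positivity)
  have h4' : (0:ℝ) < Real.Gamma (μ * (m:ℝ) + ϑ + μ) := Real.Gamma_pos_of_pos (by positivity)
  have h5 := facpos m
  have hgl := gamma_lb μ (μ * (m:ℝ) + ϑ) hμ hμ1 hy1
  -- rewrite b (m+1)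
  have e1 : ζ + ((m+1:ℕ):ℝ) = (ζ + (m:ℝ)) + 1 := by push_cast; ring
  have e2 : μ * ((m+1:ℕ):ℝ) + ϑ = (μ * (m:ℝ) + ϑ) + μ := by push_cast; ring
  have e3 : Real.Gamma (ζ + ((m+1:ℕ):ℝ)) = (ζ + (m:ℝ)) * Real.Gamma (ζ + (m:ℝ)) := by
    rw [e1, Real.Gamma_add_one (by positivity)]
  rw [Real.norm_eq_abs, Real.norm_eq_abs,
    abs_of_nonneg (fcpBound_nonneg μ ϑ ζ x hμ hζ hϑ0 hx _),
    abs_of_nonneg (fcpBound_nonneg μ ϑ ζ x hμ hζ hϑ0 hx _)]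
  unfold fcpBound
  rw [e3, e2, Nat.factorial_succ]
  push_cast
  rw [mul_div_assoc']
  rw [div_le_div_iff₀ (by positivity) (by positivity), pow_succ]
  -- key inequality
  have key : 2 * ((ζ + (m:ℝ)) * (2*x) * ((m:ℝ)+2)^2) * Real.Gamma (μ * (m:ℝ) + ϑ)
      ≤ ((m:ℝ)+1)^3 * Real.Gamma (μ * (m:ℝ) + ϑ + μ) := by
    have e4 : 2 * ((ζ + (m:ℝ)) * (2*x) * ((m:ℝ)+2)^2) ≤ 16 * x * ((m:ℝ)+1)^3 := by
      have hm0 : (0:ℝ) ≤ (m:ℝ) := Nat.cast_nonneg m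
      have hζm2 : ζ + (m:ℝ) ≤ 2*(m:ℝ) := by linarith
      have hA : (ζ+(m:ℝ))*((m:ℝ)+2)^2 ≤ 2*(m:ℝ)*((m:ℝ)+2)^2 :=
        mul_le_mul_of_nonneg_right hζm2 (by positivity)
      have hB : 2*(m:ℝ)*((m:ℝ)+2)^2 ≤ 4*((m:ℝ)+1)^3 := by nlinarith [hm0, mul_nonneg hm0 hm0, mul_nonneg (mul_nonneg hm0 hm0) hm0]
      have hAB := hA.trans hB
      have := mul_le_mul_of_nonneg_left hAB (by positivity : (0:ℝ) ≤ 4*x)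
      nlinarith [this]
    have e5 : 16 * x ≤ 1/2 * 1/2 * (μ * (m:ℝ) + ϑ + 1) ^ μ := by nlinarith [h64]
    have e6 : 16 * x * ((m:ℝ)+1)^3 * Real.Gamma (μ * (m:ℝ) + ϑ)
        ≤ ((m:ℝ)+1)^3 * Real.Gamma (μ * (m:ℝ) + ϑ + μ) := by
      have hmp : (0:ℝ) < ((m:ℝ)+1)^3 := by positivity
      have hΓ := Real.Gamma_pos_of_pos (show (0:ℝ) < μ * (m:ℝ) + ϑ by positivity)
      nlinarith [mul_le_mul_of_nonneg_left hgl hmp.le,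
        mul_le_mul_of_nonneg_right (mul_le_mul_of_nonneg_right e5 hΓ.le) hmp.le]
    calc 2 * ((ζ + (m:ℝ)) * (2*x) * ((m:ℝ)+2)^2) * Real.Gamma (μ * (m:ℝ) + ϑ)
        ≤ 16 * x * ((m:ℝ)+1)^3 * Real.Gamma (μ * (m:ℝ) + ϑ) :=
          mul_le_mul_of_nonneg_right e4 (Real.Gamma_pos_of_pos (by positivity)).le
      _ ≤ _ := e6
  have h2x : (0:ℝ) < (2*x)^m := pow_pos (by linarith) m
  have hQ : (0:ℝ) ≤ Real.Gamma ϑ *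
      Real.Gamma (ζ + (m:ℝ)) * (2*x)^m * Real.Gamma ζ * (m.factorial : ℝ) / 2 := by positivity
  have hfin := mul_le_mul_of_nonneg_right key hQ
  linarith [hfin]
private lemma fcpTerm_le (μ ϑ ζ x : ℝ) (hμ : 0 < μ) (hζ : 0 < ζ) (hϑ0 : 0 < ϑ) (hx : 0 < x)
    (m : ℕ) : ∀ p ∈ Finset.HasAntidiagonal.antidiagonal m, |fcpTerm μ ϑ ζ x p| ≤
      Real.Gamma ϑ * Real.Gamma (ζ + (m:ℝ)) * (2*x) ^ m * (m:ℝ) /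
        (Real.Gamma ζ * m.factorial * Real.Gamma (μ * (m:ℝ) + ϑ)) := by
  rintro ⟨n, k⟩ hp
  rw [Finset.HasAntidiagonal.mem_antidiagonal] at hp
  dsimp only at hp
  subst hp
  rw [fcpTerm_abs μ ϑ ζ x hζ hϑ0 hx n k (Real.Gamma_pos_of_pos (by positivity))]
  have hΓζ := Real.Gamma_pos_of_pos hζ
  have hΓϑ := Real.Gamma_pos_of_pos hϑ0
  have h3 : (0:ℝ) < Real.Gamma (ζ + ((n+k:ℕ):ℝ)) := Real.Gamma_pos_of_pos (by positivity)
  have h4 : (0:ℝ) < Real.Gamma (μ * ((n+k:ℕ):ℝ) + ϑ) := Real.Gamma_pos_of_pos (by positivity)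
  have hfn := facpos n
  have hfk := facpos k
  have hfm := facpos (n+k)
  rw [div_le_div_iff₀ (by positivity) (by positivity), mul_pow]
  have hfac : ((n+k).factorial : ℝ) = ((n+k).choose k : ℝ) * n.factorial * k.factorial := by
    exact_mod_cast (Nat.add_choose_mul_factorial_mul_factorial n k).symm
  have hch : ((n+k).choose k : ℝ) ≤ 2 ^ (n+k) := by
    have h : (n+k).choose k ≤ 2 ^ (n+k) := by
      calc (n+k).choose k ≤ ∑ i ∈ Finset.range (n+k+1), (n+k).choose i :=
            Finset.single_le_sum (fun i _ => Nat.zero_le _) (Finset.mem_range.2 (by omega))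
        _ = 2 ^ (n+k) := Nat.sum_range_choose (n+k)
    exact_mod_cast h
  have h1 : (n:ℝ) ≤ ((n+k:ℕ):ℝ) := by exact_mod_cast Nat.le_add_right n k
  have h2 : ((n+k).factorial : ℝ) ≤ 2^(n+k) * ((n.factorial:ℝ) * (k.factorial:ℝ)) := by
    rw [hfac]
    calc ((n+k).choose k : ℝ) * n.factorial * k.factorial
        ≤ 2^(n+k) * (n.factorial:ℝ) * k.factorial :=
          mul_le_mul_of_nonneg_right (mul_le_mul_of_nonneg_right hch hfn.le) hfk.le
      _ = 2^(n+k) * ((n.factorial:ℝ) * (k.factorial:ℝ)) := by ring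
  have key : (n:ℝ) * ((n+k).factorial : ℝ)
      ≤ ((n+k:ℕ):ℝ) * (2^(n+k) * ((n.factorial:ℝ)*(k.factorial:ℝ))) :=
    mul_le_mul h1 h2 (by positivity) (by positivity)
  have hQ : (0:ℝ) ≤ Real.Gamma ϑ * Real.Gamma (ζ + ((n+k:ℕ):ℝ)) * x^(n+k) * Real.Gamma ζ *
      Real.Gamma (μ*((n+k:ℕ):ℝ)+ϑ) := by positivity
  have hfin := mul_le_mul_of_nonneg_right key hQ
  nlinarith [hfin]

private lemma antidiag_abs_le (μ ϑ ζ x : ℝ) (hμ : 0 < μ) (hζ : 0 < ζ) (hϑ0 : 0 < ϑ) (hx : 0 < x)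
    (m : ℕ) : ∑ p ∈ Finset.HasAntidiagonal.antidiagonal m, |fcpTerm μ ϑ ζ x p| ≤ fcpBound μ ϑ ζ x m := by
  have hΓζ := Real.Gamma_pos_of_pos hζ
  have hΓϑ := Real.Gamma_pos_of_pos hϑ0
  have h3 : (0:ℝ) < Real.Gamma (ζ + (m:ℝ)) := Real.Gamma_pos_of_pos (by positivity)
  have h4 : (0:ℝ) < Real.Gamma (μ * (m:ℝ) + ϑ) := Real.Gamma_pos_of_pos (by positivity)
  have hfm := facpos m
  calc ∑ p ∈ Finset.HasAntidiagonal.antidiagonal m, |fcpTerm μ ϑ ζ x p|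
      ≤ (Finset.HasAntidiagonal.antidiagonal m).card •
        (Real.Gamma ϑ * Real.Gamma (ζ + (m:ℝ)) * (2*x) ^ m * (m:ℝ) /
          (Real.Gamma ζ * m.factorial * Real.Gamma (μ * (m:ℝ) + ϑ))) :=
        Finset.sum_le_card_nsmul _ _ _ (fcpTerm_le μ ϑ ζ x hμ hζ hϑ0 hx m)
    _ = ((m:ℝ)+1) * (Real.Gamma ϑ * Real.Gamma (ζ + (m:ℝ)) * (2*x) ^ m * (m:ℝ) /
          (Real.Gamma ζ * m.factorial * Real.Gamma (μ * (m:ℝ) + ϑ))) := by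
        rw [Finset.Nat.card_antidiagonal, nsmul_eq_mul]
        push_cast
        ring
    _ ≤ fcpBound μ ϑ ζ x m := by
        unfold fcpBound
        rw [mul_div_assoc', div_le_div_iff₀ (by positivity) (by positivity)]
        have hm1 : (m:ℝ) ≤ (m:ℝ)+1 := by linarith
        have hR : (0:ℝ) ≤ Real.Gamma ϑ * Real.Gamma (ζ + (m:ℝ)) * (2*x)^m * ((m:ℝ)+1) *
            (Real.Gamma ζ * (m.factorial:ℝ) * Real.Gamma (μ * (m:ℝ) + ϑ)) := by positivity
        nlinarith [mul_le_mul_of_nonneg_right hm1 hR]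

private lemma fcpTerm_abs_summable (μ ϑ ζ x : ℝ) (hμ : 0 < μ) (hμ1 : μ ≤ 1) (hζ : 0 < ζ)
    (hϑ0 : 0 < ϑ) (hx : 0 < x) : Summable fun p : ℕ × ℕ => |fcpTerm μ ϑ ζ x p| := by
  rw [← Finset.HasAntidiagonal.sigmaAntidiagonalEquivProd.summable_iff]
  refine (summable_sigma_of_nonneg (fun _ => abs_nonneg _)).2 ⟨fun m => Summable.of_finite, ?_⟩
  apply Summable.of_nonneg_of_le (fun m => tsum_nonneg (fun _ => abs_nonneg _)) _
    (fcpBound_summable μ ϑ ζ x hμ hμ1 hζ hϑ0 hx)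
  intro m
  exact le_of_eq_of_le (Finset.tsum_subtype _ (fun p => |fcpTerm μ ϑ ζ x p|))
    (antidiag_abs_le μ ϑ ζ x hμ hζ hϑ0 hx m)

private lemma antidiag_sum (μ ϑ ζ x : ℝ) (hμ : 0 < μ) (hζ : 0 < ζ) (hϑ0 : 0 < ϑ) (m : ℕ) :
    ∑ p ∈ Finset.HasAntidiagonal.antidiagonal m, fcpTerm μ ϑ ζ x p =
      if m = 1 then ζ * Real.Gamma ϑ * x / Real.Gamma (μ + ϑ) else 0 := by
  have hΓζ := Real.Gamma_pos_of_pos hζ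
  have hpt : ∀ p ∈ Finset.HasAntidiagonal.antidiagonal m, fcpTerm μ ϑ ζ x p =
      (Real.Gamma ϑ * Real.Gamma (ζ + (m:ℝ)) * x ^ m /
        (Real.Gamma ζ * Real.Gamma (μ * (m:ℝ) + ϑ))) *
        ((p.1:ℝ) * (-1)^p.2 / ((p.1.factorial : ℝ) * (p.2.factorial : ℝ))) := by
    rintro ⟨n, k⟩ hp
    rw [Finset.HasAntidiagonal.mem_antidiagonal] at hp
    dsimp only at hp ⊢
    subst hp
    rw [fcpTerm_eq μ ϑ ζ x hζ n k (Real.Gamma_pos_of_pos (by positivity)).ne']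
    have h4 := Real.Gamma_pos_of_pos (show (0:ℝ) < μ * ((n+k:ℕ):ℝ) + ϑ by positivity)
    have h3 := Real.Gamma_pos_of_pos (show (0:ℝ) < ζ + ((n+k:ℕ):ℝ) by positivity)
    have hfn := facpos n
    have hfk := facpos k
    field_simp
  rw [Finset.sum_congr rfl hpt, ← Finset.mul_sum]
  have hcomb : ∑ p ∈ Finset.HasAntidiagonal.antidiagonal m,
      ((p.1:ℝ) * (-1)^p.2 / ((p.1.factorial : ℝ) * (p.2.factorial : ℝ)))
      = (if m = 1 then 1 else 0) / m.factorial := by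
    rw [Finset.Nat.sum_antidiagonal_eq_sum_range_succ_mk, ← comb_sum m, Finset.sum_div]
    apply Finset.sum_congr rfl
    intro i hi
    have him : i ≤ m := Nat.lt_succ_iff.1 (Finset.mem_range.1 hi)
    dsimp only
    rw [Nat.cast_choose ℝ him]
    have hfi := facpos i
    have hfmi := facpos (m - i)
    have hfm := facpos m
    field_simp
  rw [hcomb]
  rcases eq_or_ne m 1 with h1 | h1
  · subst h1
    norm_num
    rw [Real.Gamma_add_one hζ.ne']
    have h4 := Real.Gamma_pos_of_pos (show (0:ℝ) < μ + ϑ by positivity)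
    field_simp
  · simp [h1]
set_option maxHeartbeats 1000000 in
/-- Mean of the fractional counting process:
`∑_n n P(n,t) = ζ Γ(ϑ) λ t^θ / Γ(μ+ϑ)`, the series converging absolutely. -/
theorem fcp_mean (μ ϑ ζ θ lam t : ℝ) (hμ : 0 < μ) (hμ1 : μ ≤ 1) (hζ : 0 < ζ)
    (hϑ : μ * ζ ≤ ϑ) (hθ : 0 < θ) (hθ1 : θ ≤ 1) (hlam : 0 < lam) (ht : 0 < t) :
    (Summable fun n : ℕ => |(n : ℝ) * fcpP μ ϑ ζ θ lam n t|) ∧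
    (∑' n : ℕ, (n : ℝ) * fcpP μ ϑ ζ θ lam n t
      = ζ * Real.Gamma ϑ * lam * t ^ θ / Real.Gamma (μ + ϑ)) := by
  have hϑ0 : 0 < ϑ := lt_of_lt_of_le (mul_pos hμ hζ) hϑ
  have hx : (0:ℝ) < lam * t ^ θ := mul_pos hlam (Real.rpow_pos_of_pos ht θ)
  set x := lam * t ^ θ with hxdef
  have habs_sum := fcpTerm_abs_summable μ ϑ ζ x hμ hμ1 hζ hϑ0 hx
  have hg : Summable (fcpTerm μ ϑ ζ x) := habs_sum.of_abs
  obtain ⟨hfib, houter⟩ :=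
    (summable_prod_of_nonneg (f := fun p : ℕ × ℕ => |fcpTerm μ ϑ ζ x p|)
      (fun _ => abs_nonneg _)).1 habs_sum
  have heqP : ∀ n : ℕ, (n : ℝ) * fcpP μ ϑ ζ θ lam n t = ∑' k, fcpTerm μ ϑ ζ x (n, k) := by
    intro n
    simp only [fcpP, fcpTerm, ← hxdef]
    rw [tsum_mul_left]
    ring
  constructor
  · apply Summable.of_nonneg_of_le (fun n => abs_nonneg _) _ houter
    intro n
    rw [heqP n]
    have h := norm_tsum_le_tsum_norm (f := fun k => fcpTerm μ ϑ ζ x (n, k))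
      (by simpa [Real.norm_eq_abs] using hfib n)
    simpa [Real.norm_eq_abs] using h
  · have step1 : ∑' n : ℕ, (n:ℝ) * fcpP μ ϑ ζ θ lam n t = ∑' p : ℕ × ℕ, fcpTerm μ ϑ ζ x p := by
      calc ∑' n : ℕ, (n:ℝ) * fcpP μ ϑ ζ θ lam n t
          = ∑' n : ℕ, ∑' k : ℕ, fcpTerm μ ϑ ζ x (n, k) := tsum_congr heqP
        _ = ∑' p : ℕ × ℕ, fcpTerm μ ϑ ζ x p :=
            (Summable.tsum_prod' hg (fun n => (hfib n).of_abs)).symm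
    have h2 : Summable fun σ : Σ m : ℕ, (Finset.HasAntidiagonal.antidiagonal m : Finset (ℕ × ℕ)) =>
        fcpTerm μ ϑ ζ x (Finset.HasAntidiagonal.sigmaAntidiagonalEquivProd σ) := by
      exact Finset.HasAntidiagonal.sigmaAntidiagonalEquivProd.summable_iff.2 hg
    have hmid : ∀ m : ℕ, (∑' c : (Finset.HasAntidiagonal.antidiagonal m : Finset (ℕ × ℕ)),
        fcpTerm μ ϑ ζ x (Finset.HasAntidiagonal.sigmaAntidiagonalEquivProd ⟨m, c⟩))
        = if m = 1 then ζ * Real.Gamma ϑ * x / Real.Gamma (μ + ϑ) else 0 := by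
      intro m
      have hc : ∀ c : (Finset.HasAntidiagonal.antidiagonal m : Finset (ℕ × ℕ)),
          fcpTerm μ ϑ ζ x (Finset.HasAntidiagonal.sigmaAntidiagonalEquivProd ⟨m, c⟩)
            = fcpTerm μ ϑ ζ x (c : ℕ × ℕ) := fun c => rfl
      rw [tsum_congr hc, Finset.tsum_subtype _ (fun p => fcpTerm μ ϑ ζ x p)]
      exact antidiag_sum μ ϑ ζ x hμ hζ hϑ0 m
    have step2 : ∑' p : ℕ × ℕ, fcpTerm μ ϑ ζ x p
        = ζ * Real.Gamma ϑ * x / Real.Gamma (μ + ϑ) := by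
      rw [← Finset.HasAntidiagonal.sigmaAntidiagonalEquivProd.tsum_eq (fcpTerm μ ϑ ζ x)]
      rw [Summable.tsum_sigma' (fun m => Summable.of_finite) h2]
      rw [tsum_congr hmid]
      exact tsum_eq_single 1 (fun m hm => by simp [hm])
    rw [step1, step2, hxdef]
    ring
end

section
/- Let 0 < μ ≤ 1, ζ > 0, ϑ ≥ μζ, 0 < θ ≤ 1, λ > 0, t > 0, let G ∈ [0,1] and let k ≥ 1 be an integer. Denote by P_η(n,t) the FCP probability function with rate parameter η. Then the binomial-thinning identity underlying the order-statistics theorem holds: ∑_{n=k}^∞ ( ∑_{j=k}^{n} C(n,j) G^j (1−G)^{n−j} ) · P_λ(n,t) = ∑_{j=k}^∞ P_{λG}(j,t) = ∑_{j=k}^∞ Γ(ϑ) (ζ)_j (λ G t^θ)^j / j! · E_{μ,ϑ+μj}^{ζ+j}(−λ G t^θ), all series converging absolutely. -/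
open Real

namespace FCPaux

/-- coefficient `(ζ)_m / (m! Γ(μ m + ϑ))` -/
noncomputable def Dco (μ ϑ ζ : ℝ) (m : ℕ) : ℝ :=
  risingFactorial ζ m / (m.factorial * Real.Gamma (μ * m + ϑ))

lemma rf_pos {ζ : ℝ} (hζ : 0 < ζ) (m : ℕ) : 0 < risingFactorial ζ m :=
  div_pos (Real.Gamma_pos_of_pos (by positivity)) (Real.Gamma_pos_of_pos hζ)

lemma Dco_pos {μ ϑ ζ : ℝ} (hμ : 0 ≤ μ) (hϑ : 0 < ϑ) (hζ : 0 < ζ) (m : ℕ) :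
    0 < Dco μ ϑ ζ m := by
  have h1 : (0:ℝ) < μ * m + ϑ := by positivity
  have := Real.Gamma_pos_of_pos h1
  have : (0:ℝ) < m.factorial := by positivity
  exact div_pos (rf_pos hζ m) (by positivity)

lemma rf_succ {ζ : ℝ} (hζ : 0 < ζ) (m : ℕ) :
    risingFactorial ζ (m + 1) = (ζ + m) * risingFactorial ζ m := by
  have h : ζ + (m:ℝ) ≠ 0 := by positivity
  unfold risingFactorial
  push_cast
  rw [show ζ + ((m:ℝ) + 1) = (ζ + m) + 1 by ring, Real.Gamma_add_one h, mul_div_assoc]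

lemma gamma_interp {μ : ℝ} (hμ : 0 < μ) (hμ1 : μ ≤ 1) {s : ℝ} (hs : 0 < s) :
    Real.Gamma (s + 1) ≤ Real.Gamma (s + μ) * (s + μ) ^ (1 - μ) := by
  have hsμ : (0:ℝ) < s + μ := by linarith
  have hsμ1 : (0:ℝ) < s + μ + 1 := by linarith
  have hcx := Real.convexOn_log_Gamma.2 (Set.mem_Ioi.2 hsμ) (Set.mem_Ioi.2 hsμ1)
    (le_of_lt hμ) (by linarith : (0:ℝ) ≤ 1 - μ) (by ring)
  have hpoint : μ • (s + μ) + (1 - μ) • (s + μ + 1) = s + 1 := by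
    simp only [smul_eq_mul]; ring
  rw [hpoint] at hcx
  simp only [Function.comp_apply, smul_eq_mul] at hcx
  have h2 : Real.Gamma (s + μ + 1) = (s + μ) * Real.Gamma (s + μ) :=
    Real.Gamma_add_one hsμ.ne'
  have hΓ1 : 0 < Real.Gamma (s + 1) := Real.Gamma_pos_of_pos (by linarith)
  have hΓ2 : 0 < Real.Gamma (s + μ) := Real.Gamma_pos_of_pos hsμ
  rw [h2, Real.log_mul hsμ.ne' hΓ2.ne'] at hcx
  have : Real.log (Real.Gamma (s + 1)) ≤
      Real.log (Real.Gamma (s + μ)) + (1 - μ) * Real.log (s + μ) := by nlinarith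
  calc Real.Gamma (s + 1) = Real.exp (Real.log (Real.Gamma (s + 1))) := (Real.exp_log hΓ1).symm
    _ ≤ Real.exp (Real.log (Real.Gamma (s + μ)) + (1 - μ) * Real.log (s + μ)) :=
        Real.exp_le_exp.2 this
    _ = Real.Gamma (s + μ) * (s + μ) ^ (1 - μ) := by
        rw [Real.exp_add, Real.exp_log hΓ2, Real.rpow_def_of_pos hsμ, mul_comm (1 - μ)]

lemma gamma_ratio {μ : ℝ} (hμ : 0 < μ) (hμ1 : μ ≤ 1) {s : ℝ} (hs : μ ≤ s) (hs0 : 0 < s) :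
    Real.Gamma s * (s ^ μ / 2) ≤ Real.Gamma (s + μ) := by
  have h1 : Real.Gamma (s + 1) = s * Real.Gamma s := Real.Gamma_add_one hs0.ne'
  have h2 := gamma_interp hμ hμ1 hs0
  have hsμ : (0:ℝ) < s + μ := by linarith
  have hΓ : 0 < Real.Gamma (s + μ) := Real.Gamma_pos_of_pos hsμ
  have h3 : (s + μ) ^ (1 - μ) ≤ 2 * s ^ (1 - μ) := by
    calc (s + μ) ^ (1 - μ) ≤ (2 * s) ^ (1 - μ) := by
          apply Real.rpow_le_rpow hsμ.le (by linarith) (by linarith)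
      _ = 2 ^ (1 - μ) * s ^ (1 - μ) := Real.mul_rpow (by norm_num) hs0.le
      _ ≤ 2 * s ^ (1 - μ) := by
          have : (2:ℝ) ^ (1 - μ) ≤ 2 ^ (1:ℝ) :=
            Real.rpow_le_rpow_of_exponent_le (by norm_num) (by linarith)
          rw [Real.rpow_one] at this
          have := Real.rpow_pos_of_pos hs0 (1 - μ)
          nlinarith
  have h4 : s * Real.Gamma s ≤ Real.Gamma (s + μ) * (2 * s ^ (1 - μ)) := by
    rw [← h1]
    calc Real.Gamma (s + 1) ≤ Real.Gamma (s + μ) * (s + μ) ^ (1 - μ) := h2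
      _ ≤ Real.Gamma (s + μ) * (2 * s ^ (1 - μ)) := by
          exact mul_le_mul_of_nonneg_left h3 hΓ.le
  have hsplit : s = s ^ μ * s ^ (1 - μ) := by
    rw [← Real.rpow_add hs0]; norm_num
  have hpow : (0:ℝ) < s ^ (1 - μ) := Real.rpow_pos_of_pos hs0 _
  have h5 : Real.Gamma s * (s ^ μ / 2) * s ^ (1 - μ) ≤ Real.Gamma (s + μ) * s ^ (1 - μ) := by
    calc Real.Gamma s * (s ^ μ / 2) * s ^ (1 - μ) = (s ^ μ * s ^ (1 - μ)) * Real.Gamma s / 2 := by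
          ring
      _ = s * Real.Gamma s / 2 := by rw [← hsplit]
      _ ≤ (Real.Gamma (s + μ) * (2 * s ^ (1 - μ))) / 2 := by linarith
      _ = Real.Gamma (s + μ) * s ^ (1 - μ) := by ring
  exact (mul_le_mul_iff_of_pos_right hpow).1 h5

end FCPaux

namespace FCPaux

open Filter

lemma summable_Dco {μ ϑ ζ : ℝ} (hμ : 0 < μ) (hμ1 : μ ≤ 1) (hζ : 0 < ζ) (hϑ : 0 < ϑ)
    {r : ℝ} (hr : 0 ≤ r) :
    Summable fun m : ℕ => ((m : ℝ) + 1) ^ 2 * Dco μ ϑ ζ m * r ^ m := by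
  have hT : Tendsto (fun m : ℕ => (μ * m + ϑ) ^ μ) atTop atTop := by
    apply (tendsto_rpow_atTop hμ).comp
    apply tendsto_atTop_add_const_right
    exact (tendsto_natCast_atTop_atTop (R := ℝ)).const_mul_atTop hμ
  apply summable_of_ratio_norm_eventually_le (r := 1/2) (by norm_num)
  filter_upwards [hT.eventually_ge_atTop (16 * (ζ + 1) * (r + 1)),
    eventually_ge_atTop 1] with m h1 hm1
  set s : ℝ := μ * m + ϑ with hs_def
  have hm1' : (1:ℝ) ≤ (m:ℝ) := by exact_mod_cast hm1
  have hs0 : 0 < s := by positivity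
  have hsμ : μ ≤ s := by nlinarith
  have hg : Real.Gamma s * (s ^ μ / 2) ≤ Real.Gamma (s + μ) := gamma_ratio hμ hμ1 hsμ hs0
  have hΓs : 0 < Real.Gamma s := Real.Gamma_pos_of_pos hs0
  have hΓsμ : 0 < Real.Gamma (s + μ) := Real.Gamma_pos_of_pos (by linarith)
  have hspow : 0 < s ^ μ := Real.rpow_pos_of_pos hs0 μ
  have hfac : (0:ℝ) < m.factorial := by positivity
  have hD1 : Dco μ ϑ ζ (m + 1) =
      ((ζ + m) * risingFactorial ζ m) / ((((m:ℝ) + 1) * m.factorial) * Real.Gamma (s + μ)) := by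
    have harg : μ * ((m + 1 : ℕ) : ℝ) + ϑ = s + μ := by push_cast; rw [hs_def]; ring
    unfold Dco
    rw [rf_succ hζ m, harg, Nat.factorial_succ]
    push_cast
    ring
  have hDle : Dco μ ϑ ζ (m + 1) ≤ Dco μ ϑ ζ m * (2 * (ζ + m)) / (((m:ℝ) + 1) * s ^ μ) := by
    rw [hD1]
    have hnum : (0:ℝ) ≤ (ζ + m) * risingFactorial ζ m := by
      have := rf_pos hζ m; positivity
    have hbpos : (0:ℝ) < (((m:ℝ) + 1) * m.factorial) * (Real.Gamma s * (s ^ μ / 2)) := by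
      positivity
    have hden : (((m:ℝ) + 1) * m.factorial) * (Real.Gamma s * (s ^ μ / 2)) ≤
        (((m:ℝ) + 1) * m.factorial) * Real.Gamma (s + μ) := by
      apply mul_le_mul_of_nonneg_left hg (by positivity)
    calc ((ζ + m) * risingFactorial ζ m) / ((((m:ℝ) + 1) * m.factorial) * Real.Gamma (s + μ))
        ≤ ((ζ + m) * risingFactorial ζ m) /
            ((((m:ℝ) + 1) * m.factorial) * (Real.Gamma s * (s ^ μ / 2))) :=
          div_le_div_of_nonneg_left hnum hbpos hden
      _ = Dco μ ϑ ζ m * (2 * (ζ + m)) / (((m:ℝ) + 1) * s ^ μ) := by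
          unfold Dco; rw [← hs_def]; field_simp
  have hDpos : 0 < Dco μ ϑ ζ m := Dco_pos hμ.le hϑ hζ m
  have hDpos1 : 0 < Dco μ ϑ ζ (m + 1) := Dco_pos hμ.le hϑ hζ (m + 1)
  have hfrac : ((m:ℝ) + 2) ^ 2 * (2 * (ζ + m)) * r / (((m:ℝ) + 1) * s ^ μ)
      ≤ ((m:ℝ) + 1) ^ 2 / 2 := by
    rw [div_le_iff₀ (by positivity)]
    have e2 : ζ + (m:ℝ) ≤ (ζ + 1) * ((m:ℝ) + 1) := by nlinarith
    calc ((m:ℝ) + 2) ^ 2 * (2 * (ζ + m)) * r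
        ≤ (2 * ((m:ℝ) + 1)) ^ 2 * (2 * ((ζ + 1) * ((m:ℝ) + 1))) * (r + 1) := by
          gcongr <;> nlinarith
      _ = ((m:ℝ) + 1) ^ 2 * ((m:ℝ) + 1) * (8 * ((ζ + 1) * (r + 1))) := by ring
      _ ≤ ((m:ℝ) + 1) ^ 2 * ((m:ℝ) + 1) * (s ^ μ / 2) := by
          gcongr <;> nlinarith
      _ = ((m:ℝ) + 1) ^ 2 / 2 * (((m:ℝ) + 1) * s ^ μ) := by ring
  have hnorm : ∀ j : ℕ, ‖((j : ℝ) + 1) ^ 2 * Dco μ ϑ ζ j * r ^ j‖ =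
      ((j : ℝ) + 1) ^ 2 * Dco μ ϑ ζ j * r ^ j := fun j => by
    have := Dco_pos hμ.le hϑ hζ j
    rw [Real.norm_eq_abs, abs_of_nonneg (by positivity)]
  rw [hnorm, hnorm]
  push_cast
  calc ((m:ℝ) + 1 + 1) ^ 2 * Dco μ ϑ ζ (m + 1) * r ^ (m + 1)
      ≤ ((m:ℝ) + 2) ^ 2 * (Dco μ ϑ ζ m * (2 * (ζ + m)) / (((m:ℝ) + 1) * s ^ μ)) * r ^ (m + 1) := by
        rw [show (m:ℝ) + 1 + 1 = (m:ℝ) + 2 by ring]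
        gcongr
    _ = Dco μ ϑ ζ m * r ^ m *
          (((m:ℝ) + 2) ^ 2 * (2 * (ζ + m)) * r / (((m:ℝ) + 1) * s ^ μ)) := by
        rw [pow_succ]; ring
    _ ≤ Dco μ ϑ ζ m * r ^ m * (((m:ℝ) + 1) ^ 2 / 2) := by
        apply mul_le_mul_of_nonneg_left hfrac (by positivity)
    _ = 1 / 2 * (((m:ℝ) + 1) ^ 2 * Dco μ ϑ ζ m * r ^ m) := by ring

end FCPaux

namespace FCPaux

lemma choose_le_two_pow (N i : ℕ) : (N.choose i : ℝ) ≤ 2 ^ N := by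
  have h : N.choose i ≤ 2 ^ N := by
    rcases le_or_gt i N with h | h
    · calc N.choose i ≤ ∑ j ∈ Finset.range (N + 1), N.choose j :=
            Finset.single_le_sum (fun j _ => Nat.zero_le _)
              (Finset.mem_range.2 (Nat.lt_succ_of_le h))
        _ = 2 ^ N := Nat.sum_range_choose N
    · simp [Nat.choose_eq_zero_of_lt h]
  exact_mod_cast h

/-- term of the double series -/
noncomputable def TT (μ ϑ ζ x : ℝ) (n k : ℕ) : ℝ :=
  Real.Gamma ϑ * Dco μ ϑ ζ (n + k) * ((n + k).choose n) * x ^ n * (-x) ^ k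

lemma rf_mul (ζ : ℝ) (hζ : 0 < ζ) (n k : ℕ) :
    risingFactorial ζ n * risingFactorial (ζ + n) k = risingFactorial ζ (n + k) := by
  have hΓζn : Real.Gamma (ζ + (n : ℝ)) ≠ 0 := (Real.Gamma_pos_of_pos (by positivity)).ne'
  unfold risingFactorial
  rw [Nat.cast_add, ← add_assoc, div_mul_div_comm, mul_comm (Real.Gamma ζ),
    mul_div_mul_left _ _ hΓζn]

lemma fcpP_eq (μ ϑ ζ θ lam' t : ℝ) (hζ : 0 < ζ) (n : ℕ) :
    fcpP μ ϑ ζ θ lam' n t = ∑' k : ℕ, TT μ ϑ ζ (lam' * t ^ θ) n k := by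
  unfold fcpP
  rw [← tsum_mul_left]
  apply tsum_congr
  intro k
  have hfact : (((n + k).factorial : ℕ) : ℝ) =
      ((n + k).choose n : ℝ) * n.factorial * k.factorial := by
    have := Nat.choose_mul_factorial_mul_factorial (Nat.le_add_right n k)
    rw [Nat.add_sub_cancel_left] at this
    exact_mod_cast this.symm
  have hn : (n.factorial : ℝ) ≠ 0 := by positivity
  have hk : (k.factorial : ℝ) ≠ 0 := by positivity
  unfold TT Dco
  rw [← rf_mul ζ hζ n k, hfact]
  unfold risingFactorial
  have hΓζn : Real.Gamma (ζ + (n : ℝ)) ≠ 0 := (Real.Gamma_pos_of_pos (by positivity)).ne'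
  have hΓζ : Real.Gamma ζ ≠ 0 := (Real.Gamma_pos_of_pos hζ).ne'
  have hC : ((n + k).choose n : ℝ) ≠ 0 := by
    exact_mod_cast (Nat.choose_pos (Nat.le_add_right n k)).ne'
  field_simp

end FCPaux

namespace FCPaux

lemma inner_core {j m : ℕ} (hjm : j ≤ m) (G x : ℝ) :
    ∑ n ∈ Finset.Icc j m,
      ((n.choose j : ℝ) * G ^ j * (1 - G) ^ (n - j)) *
        ((m.choose n : ℝ) * x ^ n * (-x) ^ (m - n))
    = (m.choose j : ℝ) * (G * x) ^ j * (-(G * x)) ^ (m - j) := by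
  rw [← Finset.Ico_add_one_right_eq_Icc, Finset.sum_Ico_eq_sum_range,
    show m + 1 - j = (m - j) + 1 by omega]
  have hrhs : (m.choose j : ℝ) * (G * x) ^ j * (-(G * x)) ^ (m - j)
      = (m.choose j : ℝ) * G ^ j * x ^ j * ((1 - G) * x + -x) ^ (m - j) := by
    rw [show (1 - G) * x + -x = -(G * x) by ring]; ring
  rw [hrhs, add_pow, Finset.mul_sum]
  apply Finset.sum_congr rfl
  intro i hi
  have hi' : i ≤ m - j := Finset.mem_range_succ_iff.mp hi
  have h1 : j + i ≤ m := by omega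
  have hcc : (m.choose (j + i) : ℝ) * ((j + i).choose j : ℝ)
      = (m.choose j : ℝ) * ((m - j).choose i : ℝ) := by
    have h2 := Nat.choose_mul (n := m) (Nat.le_add_right j i)
    rw [Nat.add_sub_cancel_left] at h2
    exact_mod_cast h2
  rw [Nat.add_sub_cancel_left, show m - (j + i) = (m - j) - i by omega, pow_add x j i,
    mul_pow]
  linear_combination (G ^ j * (1 - G) ^ i * x ^ j * x ^ i * (-x) ^ (m - j - i)) * hcc

lemma core (k0 m : ℕ) (G x : ℝ) :
    ∑ n ∈ Finset.range (m + 1),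
      (∑ j ∈ Finset.Icc k0 n, (n.choose j : ℝ) * G ^ j * (1 - G) ^ (n - j)) *
        ((m.choose n : ℝ) * x ^ n * (-x) ^ (m - n))
    = ∑ j ∈ Finset.range (m + 1),
        (if k0 ≤ j then (1 : ℝ) else 0) * ((m.choose j : ℝ) * (G * x) ^ j * (-(G * x)) ^ (m - j)) := by
  have hrhs : ∀ j : ℕ, (if k0 ≤ j then (1 : ℝ) else 0) *
      ((m.choose j : ℝ) * (G * x) ^ j * (-(G * x)) ^ (m - j)) =
      if k0 ≤ j then ((m.choose j : ℝ) * (G * x) ^ j * (-(G * x)) ^ (m - j)) else 0 := by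
    intro j; split <;> simp
  simp only [hrhs, ← Finset.sum_filter]
  have hfil : Finset.filter (fun j => k0 ≤ j) (Finset.range (m + 1)) = Finset.Icc k0 m := by
    ext a; simp [Finset.mem_filter, Finset.mem_range, Finset.mem_Icc]; omega
  rw [hfil]
  simp only [Finset.sum_mul]
  rw [Finset.sum_comm' (s := Finset.range (m + 1)) (t := fun n => Finset.Icc k0 n)
    (t' := Finset.Icc k0 m) (s' := fun j => Finset.Icc j m)
    (by intro n j; simp only [Finset.mem_range, Finset.mem_Icc]; omega)]
  apply Finset.sum_congr rfl
  intro j hj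
  have hjm : j ≤ m := (Finset.mem_Icc.mp hj).2
  exact inner_core hjm G x

end FCPaux

namespace FCPaux

lemma TT_abs_le {μ ϑ ζ : ℝ} (hμ : 0 ≤ μ) (hϑ : 0 < ϑ) (hζ : 0 < ζ) {x x' : ℝ}
    (hx' : 0 ≤ x') (hxx : x' ≤ x) (n k : ℕ) :
    |TT μ ϑ ζ x' n k| ≤ Real.Gamma ϑ * Dco μ ϑ ζ (n + k) * (2 * x) ^ (n + k) := by
  have hΓϑ : 0 < Real.Gamma ϑ := Real.Gamma_pos_of_pos hϑ
  have hD := Dco_pos hμ hϑ hζ (n + k)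
  have habs : |TT μ ϑ ζ x' n k| =
      Real.Gamma ϑ * Dco μ ϑ ζ (n + k) * ((n + k).choose n : ℝ) * (x' ^ n * x' ^ k) := by
    unfold TT
    rw [abs_mul, abs_mul, abs_mul, abs_mul, abs_pow, abs_pow, abs_neg,
      abs_of_nonneg hx', abs_of_nonneg hΓϑ.le, abs_of_nonneg hD.le, Nat.abs_cast]
    ring
  rw [habs, ← pow_add]
  have hx0 : 0 ≤ x := le_trans hx' hxx
  calc Real.Gamma ϑ * Dco μ ϑ ζ (n + k) * ((n + k).choose n : ℝ) * x' ^ (n + k)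
      ≤ Real.Gamma ϑ * Dco μ ϑ ζ (n + k) * (2 : ℝ) ^ (n + k) * x ^ (n + k) := by
        apply mul_le_mul
        · exact mul_le_mul_of_nonneg_left (choose_le_two_pow _ _) (by positivity)
        · exact pow_le_pow_left₀ hx' hxx _
        · positivity
        · positivity
    _ = Real.Gamma ϑ * Dco μ ϑ ζ (n + k) * (2 * x) ^ (n + k) := by
        rw [mul_pow]; ring

lemma summable_W {μ ϑ ζ : ℝ} (hμ : 0 < μ) (hμ1 : μ ≤ 1) (hζ : 0 < ζ) (hϑ : 0 < ϑ)
    {c : ℝ} (hc : 0 ≤ c) :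
    Summable (fun p : ℕ × ℕ => Real.Gamma ϑ * Dco μ ϑ ζ (p.1 + p.2) * c ^ (p.1 + p.2)) := by
  have hΓϑ : 0 < Real.Gamma ϑ := Real.Gamma_pos_of_pos hϑ
  rw [← Finset.HasAntidiagonal.sigmaAntidiagonalEquivProd.summable_iff]
  have hnn : ∀ q : (Σ m : ℕ, Finset.HasAntidiagonal.antidiagonal m (A := ℕ)),
      0 ≤ ((fun p : ℕ × ℕ => Real.Gamma ϑ * Dco μ ϑ ζ (p.1 + p.2) * c ^ (p.1 + p.2)) ∘
        Finset.HasAntidiagonal.sigmaAntidiagonalEquivProd) q := by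
    rintro ⟨m, p, hp⟩
    simp only [Function.comp_apply, Finset.HasAntidiagonal.sigmaAntidiagonalEquivProd_apply]
    have := Dco_pos hμ.le hϑ hζ (p.1 + p.2)
    positivity
  rw [summable_sigma_of_nonneg hnn]
  constructor
  · intro m; exact Summable.of_finite
  · have hfib : ∀ m : ℕ,
        (∑' p : (Finset.HasAntidiagonal.antidiagonal m : Finset (ℕ × ℕ)),
          ((fun p : ℕ × ℕ => Real.Gamma ϑ * Dco μ ϑ ζ (p.1 + p.2) * c ^ (p.1 + p.2)) ∘
            Finset.HasAntidiagonal.sigmaAntidiagonalEquivProd) ⟨m, p⟩)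
        = ((m : ℝ) + 1) * (Real.Gamma ϑ * Dco μ ϑ ζ m * c ^ m) := by
      intro m
      simp only [Function.comp_apply, Finset.HasAntidiagonal.sigmaAntidiagonalEquivProd_apply]
      rw [Finset.tsum_subtype (Finset.HasAntidiagonal.antidiagonal m)
        (fun p : ℕ × ℕ => Real.Gamma ϑ * Dco μ ϑ ζ (p.1 + p.2) * c ^ (p.1 + p.2))]
      have hcg : (∑ p ∈ Finset.HasAntidiagonal.antidiagonal m,
          (Real.Gamma ϑ * Dco μ ϑ ζ (p.1 + p.2) * c ^ (p.1 + p.2))) =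
          ∑ _p ∈ Finset.HasAntidiagonal.antidiagonal m, (Real.Gamma ϑ * Dco μ ϑ ζ m * c ^ m) := by
        apply Finset.sum_congr rfl
        intro p hp
        rw [Finset.HasAntidiagonal.mem_antidiagonal.mp hp]
      rw [hcg, Finset.sum_const, Finset.Nat.card_antidiagonal, nsmul_eq_mul]
      push_cast; ring
    apply Summable.congr _ (fun m => (hfib m).symm)
    apply Summable.of_nonneg_of_le
      (fun m => by have := Dco_pos hμ.le hϑ hζ m; positivity)
      (fun m => ?_) ((summable_Dco hμ hμ1 hζ hϑ hc).mul_left (Real.Gamma ϑ))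
    have hD := Dco_pos hμ.le hϑ hζ m
    have h1 : ((m : ℝ) + 1) ≤ ((m : ℝ) + 1) ^ 2 := by nlinarith [Nat.cast_nonneg (α := ℝ) m]
    calc ((m : ℝ) + 1) * (Real.Gamma ϑ * Dco μ ϑ ζ m * c ^ m)
        ≤ ((m : ℝ) + 1) ^ 2 * (Real.Gamma ϑ * Dco μ ϑ ζ m * c ^ m) := by
          apply mul_le_mul_of_nonneg_right h1 (by positivity)
      _ = Real.Gamma ϑ * (((m : ℝ) + 1) ^ 2 * Dco μ ϑ ζ m * c ^ m) := by ring

end FCPaux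

namespace FCPaux

lemma tsum_prod_eq_antidiag (f : ℕ × ℕ → ℝ) (hf : Summable f) :
    ∑' p : ℕ × ℕ, f p = ∑' m : ℕ, ∑ p ∈ Finset.HasAntidiagonal.antidiagonal m, f p := by
  calc ∑' p : ℕ × ℕ, f p
      = ∑' q : (Σ m : ℕ, Finset.HasAntidiagonal.antidiagonal m (A := ℕ)),
          f (Finset.HasAntidiagonal.sigmaAntidiagonalEquivProd q) :=
        (Finset.HasAntidiagonal.sigmaAntidiagonalEquivProd.tsum_eq f).symm
    _ = ∑' m : ℕ, ∑' p : (Finset.HasAntidiagonal.antidiagonal m : Finset (ℕ × ℕ)),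
          f (Finset.HasAntidiagonal.sigmaAntidiagonalEquivProd ⟨m, p⟩) :=
        Summable.tsum_sigma (Finset.HasAntidiagonal.sigmaAntidiagonalEquivProd.summable_iff.mpr hf)
    _ = ∑' m : ℕ, ∑ p ∈ Finset.HasAntidiagonal.antidiagonal m, f p := by
        apply tsum_congr; intro m
        simp only [Finset.HasAntidiagonal.sigmaAntidiagonalEquivProd_apply]
        exact Finset.tsum_subtype _ f

lemma fcpP_eq_ML (μ ϑ ζ θ lam' t : ℝ) (j : ℕ) :
    fcpP μ ϑ ζ θ lam' j t =
      Real.Gamma ϑ * risingFactorial ζ j * (lam' * t ^ θ) ^ j / j.factorial *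
        mittagLeffler μ (ϑ + μ * j) (ζ + j) (-(lam' * t ^ θ)) := by
  unfold fcpP mittagLeffler
  have h1 : (∑' k : ℕ, risingFactorial (ζ + (j : ℝ)) k * (-(lam' * t ^ θ)) ^ k /
      ((k.factorial : ℝ) * Real.Gamma (μ * ((j + k : ℕ) : ℝ) + ϑ))) =
      ∑' k : ℕ, risingFactorial (ζ + (j : ℝ)) k * (-(lam' * t ^ θ)) ^ k /
      ((k.factorial : ℝ) * Real.Gamma (μ * (k : ℝ) + (ϑ + μ * (j : ℝ)))) := by
    apply tsum_congr; intro k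
    rw [show μ * ((j + k : ℕ) : ℝ) + ϑ = μ * (k : ℝ) + (ϑ + μ * (j : ℝ)) by push_cast; ring]
  rw [h1]; ring

end FCPaux


/-- Binomial-thinning identity for the FCP underlying the order-statistics theorem:
`∑_{n≥k} (∑_{j=k}^n C(n,j) G^j (1−G)^{n−j}) P_λ(n,t) = ∑_{j≥k} P_{λG}(j,t)
 = ∑_{j≥k} Γ(ϑ) (ζ)_j (λGt^θ)^j/j! · E_{μ,ϑ+μj}^{ζ+j}(−λGt^θ)`,
all series converging absolutely. -/
theorem fcp_binomial_thinning (μ ϑ ζ θ lam t G : ℝ) (hμ : 0 < μ) (hμ1 : μ ≤ 1)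
    (hζ : 0 < ζ) (hϑ : μ * ζ ≤ ϑ) (hθ : 0 < θ) (hθ1 : θ ≤ 1) (hlam : 0 < lam)
    (ht : 0 < t) (hG0 : 0 ≤ G) (hG1 : G ≤ 1) (k : ℕ) (hk : 1 ≤ k) :
    (Summable fun n : ℕ =>
      |(∑ j ∈ Finset.Icc k n, (n.choose j : ℝ) * G ^ j * (1 - G) ^ (n - j)) *
        fcpP μ ϑ ζ θ lam n t|) ∧
    (Summable fun j : ℕ => |if k ≤ j then fcpP μ ϑ ζ θ (lam * G) j t else 0|) ∧
    (Summable fun j : ℕ => |if k ≤ j then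
        Real.Gamma ϑ * risingFactorial ζ j * (lam * G * t ^ θ) ^ j / j.factorial *
          mittagLeffler μ (ϑ + μ * j) (ζ + j) (-(lam * G * t ^ θ)) else 0|) ∧
    (∑' n : ℕ, (∑ j ∈ Finset.Icc k n, (n.choose j : ℝ) * G ^ j * (1 - G) ^ (n - j)) *
        fcpP μ ϑ ζ θ lam n t
      = ∑' j : ℕ, if k ≤ j then fcpP μ ϑ ζ θ (lam * G) j t else 0) ∧
    ((∑' j : ℕ, if k ≤ j then fcpP μ ϑ ζ θ (lam * G) j t else 0)
      = ∑' j : ℕ, if k ≤ j then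
          Real.Gamma ϑ * risingFactorial ζ j * (lam * G * t ^ θ) ^ j / j.factorial *
            mittagLeffler μ (ϑ + μ * j) (ζ + j) (-(lam * G * t ^ θ)) else 0) := by
  classical
  have hϑ0 : 0 < ϑ := lt_of_lt_of_le (mul_pos hμ hζ) hϑ
  have htθ : 0 < t ^ θ := Real.rpow_pos_of_pos ht θ
  have hx : 0 < lam * t ^ θ := by positivity
  have hy0 : 0 ≤ lam * G * t ^ θ := by positivity
  have hyx : lam * G * t ^ θ ≤ lam * t ^ θ := by nlinarith
  set W : ℕ × ℕ → ℝ := fun p =>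
    Real.Gamma ϑ * FCPaux.Dco μ ϑ ζ (p.1 + p.2) * (2 * (lam * t ^ θ)) ^ (p.1 + p.2) with hWdef
  have hWsum : Summable W := FCPaux.summable_W hμ hμ1 hζ hϑ0 (by positivity)
  have hWnn : ∀ p, 0 ≤ W p := by
    rintro ⟨n, k'⟩
    have := FCPaux.Dco_pos hμ.le hϑ0 hζ (n + k')
    have := Real.Gamma_pos_of_pos hϑ0
    rw [hWdef]
    positivity
  obtain ⟨hWfib1, hWfib2⟩ := (summable_prod_of_nonneg hWnn).mp hWsum
  set B : ℕ → ℝ := fun n =>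
    ∑ j ∈ Finset.Icc k n, (n.choose j : ℝ) * G ^ j * (1 - G) ^ (n - j) with hBdef
  have h1G : (0:ℝ) ≤ 1 - G := by linarith
  have hB0 : ∀ n, 0 ≤ B n := fun n => Finset.sum_nonneg (fun j _ => by positivity)
  have hB1 : ∀ n, B n ≤ 1 := by
    intro n
    have hsub : Finset.Icc k n ⊆ Finset.range (n + 1) := by
      intro a ha
      rw [Finset.mem_Icc] at ha
      rw [Finset.mem_range]
      omega
    calc B n ≤ ∑ j ∈ Finset.range (n + 1), (n.choose j : ℝ) * G ^ j * (1 - G) ^ (n - j) :=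
          Finset.sum_le_sum_of_subset_of_nonneg hsub (fun j _ _ => by positivity)
      _ = (G + (1 - G)) ^ n := by
          rw [add_pow]
          apply Finset.sum_congr rfl
          intro j _
          ring
      _ = 1 := by norm_num
  set F : ℕ × ℕ → ℝ := fun p => B p.1 * FCPaux.TT μ ϑ ζ (lam * t ^ θ) p.1 p.2 with hFdef
  set F' : ℕ × ℕ → ℝ := fun p =>
    (if k ≤ p.1 then (1 : ℝ) else 0) * FCPaux.TT μ ϑ ζ (lam * G * t ^ θ) p.1 p.2 with hF'def
  have hTx : ∀ n k', |FCPaux.TT μ ϑ ζ (lam * t ^ θ) n k'| ≤ W (n, k') := fun n k' =>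
    FCPaux.TT_abs_le hμ.le hϑ0 hζ hx.le le_rfl n k'
  have hTy : ∀ n k', |FCPaux.TT μ ϑ ζ (lam * G * t ^ θ) n k'| ≤ W (n, k') := fun n k' =>
    FCPaux.TT_abs_le hμ.le hϑ0 hζ hy0 hyx n k'
  have hFle : ∀ p, |F p| ≤ W p := by
    rintro ⟨n, k'⟩
    calc |F (n, k')| = |B n| * |FCPaux.TT μ ϑ ζ (lam * t ^ θ) n k'| := abs_mul _ _
      _ ≤ 1 * W (n, k') := by
          apply mul_le_mul _ (hTx n k') (abs_nonneg _) zero_le_one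
          rw [abs_of_nonneg (hB0 n)]; exact hB1 n
      _ = W (n, k') := one_mul _
  have hF'le : ∀ p, |F' p| ≤ W p := by
    rintro ⟨n, k'⟩
    calc |F' (n, k')| = |if k ≤ n then (1 : ℝ) else 0| *
          |FCPaux.TT μ ϑ ζ (lam * G * t ^ θ) n k'| := abs_mul _ _
      _ ≤ 1 * W (n, k') := by
          apply mul_le_mul _ (hTy n k') (abs_nonneg _) zero_le_one
          split_ifs <;> simp
      _ = W (n, k') := one_mul _
  have hFsum : Summable F :=
    Summable.of_abs (Summable.of_nonneg_of_le (fun p => abs_nonneg _) hFle hWsum)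
  have hF'sum : Summable F' :=
    Summable.of_abs (Summable.of_nonneg_of_le (fun p => abs_nonneg _) hF'le hWsum)
  have hFfib : ∀ n, Summable fun k' => |F (n, k')| := fun n =>
    Summable.of_nonneg_of_le (fun _ => abs_nonneg _) (fun k' => hFle (n, k')) (hWfib1 n)
  have hF'fib : ∀ n, Summable fun k' => |F' (n, k')| := fun n =>
    Summable.of_nonneg_of_le (fun _ => abs_nonneg _) (fun k' => hF'le (n, k')) (hWfib1 n)
  have hrep : ∀ n, B n * fcpP μ ϑ ζ θ lam n t = ∑' k', F (n, k') := by
    intro n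
    rw [FCPaux.fcpP_eq μ ϑ ζ θ lam t hζ n]
    exact tsum_mul_left.symm
  have hrep' : ∀ j, (if k ≤ j then fcpP μ ϑ ζ θ (lam * G) j t else 0) = ∑' k', F' (j, k') := by
    intro j
    by_cases hj : k ≤ j
    · rw [if_pos hj, FCPaux.fcpP_eq μ ϑ ζ θ (lam * G) t hζ j]
      apply tsum_congr
      intro k'
      rw [hF'def]
      simp only [hj, if_true, one_mul]
    · rw [if_neg hj]
      symm
      simp only [hF'def, hj, if_false, zero_mul]
      exact tsum_zero
  have habs : ∀ n, |B n * fcpP μ ϑ ζ θ lam n t| ≤ ∑' k', W (n, k') := by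
    intro n
    rw [hrep n]
    calc |∑' k', F (n, k')| ≤ ∑' k', |F (n, k')| := by
          simpa [Real.norm_eq_abs] using
            norm_tsum_le_tsum_norm (f := fun k' => F (n, k'))
              (by simpa [Real.norm_eq_abs] using hFfib n)
      _ ≤ ∑' k', W (n, k') := Summable.tsum_le_tsum (fun k' => hFle (n, k')) (hFfib n) (hWfib1 n)
  have habs' : ∀ j, |if k ≤ j then fcpP μ ϑ ζ θ (lam * G) j t else 0| ≤ ∑' k', W (j, k') := by
    intro j
    rw [hrep' j]
    calc |∑' k', F' (j, k')| ≤ ∑' k', |F' (j, k')| := by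
          simpa [Real.norm_eq_abs] using
            norm_tsum_le_tsum_norm (f := fun k' => F' (j, k'))
              (by simpa [Real.norm_eq_abs] using hF'fib j)
      _ ≤ ∑' k', W (j, k') := Summable.tsum_le_tsum (fun k' => hF'le (j, k')) (hF'fib j) (hWfib1 j)
  have goal1 : Summable fun n : ℕ => |B n * fcpP μ ϑ ζ θ lam n t| :=
    Summable.of_nonneg_of_le (fun n => abs_nonneg _) habs hWfib2
  have goal2 : Summable fun j : ℕ => |if k ≤ j then fcpP μ ϑ ζ θ (lam * G) j t else 0| :=
    Summable.of_nonneg_of_le (fun j => abs_nonneg _) habs' hWfib2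
  have hML : ∀ j : ℕ, fcpP μ ϑ ζ θ (lam * G) j t =
      Real.Gamma ϑ * risingFactorial ζ j * (lam * G * t ^ θ) ^ j / j.factorial *
        mittagLeffler μ (ϑ + μ * j) (ζ + j) (-(lam * G * t ^ θ)) := fun j =>
    FCPaux.fcpP_eq_ML μ ϑ ζ θ (lam * G) t j
  have goal3 : Summable fun j : ℕ => |if k ≤ j then
      Real.Gamma ϑ * risingFactorial ζ j * (lam * G * t ^ θ) ^ j / j.factorial *
        mittagLeffler μ (ϑ + μ * j) (ζ + j) (-(lam * G * t ^ θ)) else 0| := by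
    refine goal2.congr fun j => ?_
    by_cases hj : k ≤ j
    · rw [if_pos hj, if_pos hj, hML j]
    · rw [if_neg hj, if_neg hj]
  have goal5 : (∑' j : ℕ, if k ≤ j then fcpP μ ϑ ζ θ (lam * G) j t else 0)
      = ∑' j : ℕ, if k ≤ j then
          Real.Gamma ϑ * risingFactorial ζ j * (lam * G * t ^ θ) ^ j / j.factorial *
            mittagLeffler μ (ϑ + μ * j) (ζ + j) (-(lam * G * t ^ θ)) else 0 := by
    apply tsum_congr
    intro j
    by_cases hj : k ≤ j
    · rw [if_pos hj, if_pos hj, hML j]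
    · rw [if_neg hj, if_neg hj]
  have hkey : ∑' p : ℕ × ℕ, F p = ∑' p : ℕ × ℕ, F' p := by
    rw [FCPaux.tsum_prod_eq_antidiag F hFsum, FCPaux.tsum_prod_eq_antidiag F' hF'sum]
    apply tsum_congr
    intro m
    rw [Finset.Nat.sum_antidiagonal_eq_sum_range_succ_mk,
      Finset.Nat.sum_antidiagonal_eq_sum_range_succ_mk]
    have hL : ∀ n ∈ Finset.range (m + 1), F (n, m - n) =
        (Real.Gamma ϑ * FCPaux.Dco μ ϑ ζ m) *
          (B n * ((m.choose n : ℝ) * (lam * t ^ θ) ^ n * (-(lam * t ^ θ)) ^ (m - n))) := by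
      intro n hn
      have hn' : n ≤ m := by
        have := Finset.mem_range.mp hn; omega
      rw [hFdef]
      simp only [FCPaux.TT]
      rw [Nat.add_sub_cancel' hn']
      ring
    have hR : ∀ j ∈ Finset.range (m + 1), F' (j, m - j) =
        (Real.Gamma ϑ * FCPaux.Dco μ ϑ ζ m) *
          ((if k ≤ j then (1 : ℝ) else 0) *
            ((m.choose j : ℝ) * (G * (lam * t ^ θ)) ^ j * (-(G * (lam * t ^ θ))) ^ (m - j))) := by
      intro j hj
      have hj' : j ≤ m := by
        have := Finset.mem_range.mp hj; omega
      rw [hF'def]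
      simp only [FCPaux.TT]
      rw [Nat.add_sub_cancel' hj',
        show lam * G * t ^ θ = G * (lam * t ^ θ) by ring]
      ring
    rw [Finset.sum_congr rfl hL, Finset.sum_congr rfl hR, ← Finset.mul_sum, ← Finset.mul_sum,
      hBdef, FCPaux.core k m G (lam * t ^ θ)]
  have goal4 : (∑' n : ℕ, B n * fcpP μ ϑ ζ θ lam n t)
      = ∑' j : ℕ, if k ≤ j then fcpP μ ϑ ζ θ (lam * G) j t else 0 := by
    calc ∑' n : ℕ, B n * fcpP μ ϑ ζ θ lam n t = ∑' n : ℕ, ∑' k', F (n, k') :=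
          tsum_congr hrep
      _ = ∑' p : ℕ × ℕ, F p := (Summable.tsum_prod hFsum).symm
      _ = ∑' p : ℕ × ℕ, F' p := hkey
      _ = ∑' j : ℕ, ∑' k', F' (j, k') := Summable.tsum_prod hF'sum
      _ = ∑' j : ℕ, (if k ≤ j then fcpP μ ϑ ζ θ (lam * G) j t else 0) :=
          (tsum_congr hrep').symm
  exact ⟨goal1, goal2, goal3, goal4, goal5⟩
end
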